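/- For t ≥ 2 with t+2 ≡ 1 or 3 (mod 6) and n divisible by t+2, ex_3(n, Tr(K_{1,t})) = n(t²−1)/6. -/

import Mathlib

/-- `H` contains the star `K_{1,t}` as a trace. -/
def HasStarTrace (t : ℕ) {V : Type*} [DecidableEq V] (H : Finset (Finset V)) : Prop :=
  ∃ (w0 : V) (w : Fin t → V) (f : Fin t → Finset V),
    Function.Injective w ∧ (∀ i, w i ≠ w0) ∧ Function.Injective f ∧
    (∀ i, f i ∈ H) ∧
    ∀ i, f i ∩ insert w0 (Finset.image w Finset.univ) = {w0, w i}


open Finset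

set_option linter.unusedSectionVars false
variable {α : Type*} [DecidableEq α] [Fintype α]

/-- every member of `W` has a neighbor outside `W`. -/
def IsEsc (E : Finset (Finset α)) (W : Finset α) : Prop :=
  ∀ w ∈ W, ∃ b, b ∉ W ∧ ({w, b} : Finset α) ∈ E

lemma edge_eq_pair {e : Finset α} (he : e.card = 2) {x : α} (hx : x ∈ e) :
    ∃ y, y ≠ x ∧ e = {x, y} := by
  have h1 : (e.erase x).card = 1 := by rw [Finset.card_erase_of_mem hx, he]
  obtain ⟨y, hy⟩ := Finset.card_eq_one.mp h1
  refine ⟨y, ?_, ?_⟩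
  · have : y ∈ e.erase x := hy ▸ Finset.mem_singleton_self y
    exact (Finset.mem_erase.mp this).1
  · rw [← Finset.insert_erase hx, hy]

lemma pair_ne_of_card {a b : α} (h : ({a, b} : Finset α).card = 2) : a ≠ b := by
  rintro rfl; simp at h

theorem lemmaV (s : ℕ) (E : Finset (Finset α)) (h2 : ∀ e ∈ E, e.card = 2)
    (hesc : ∀ W : Finset α, IsEsc E W → W.card ≤ s) : 2 * E.card ≤ s * (s + 2) := by
  induction s using Nat.strong_induction_on generalizing E with
  | _ s IH =>
  rcases E.eq_empty_or_nonempty with rfl | hne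
  · simp
  classical
  set N : α → Finset α := fun a => univ.filter (fun b => ({a, b} : Finset α) ∈ E) with hN
  have hmemN : ∀ a b, b ∈ N a ↔ ({a, b} : Finset α) ∈ E := by
    intro a b; simp [hN]
  have hNself : ∀ a, a ∉ N a := by
    intro a ha
    have := h2 _ ((hmemN a a).1 ha)
    simp at this
  have hNsymm : ∀ a b, b ∈ N a → a ∈ N b := by
    intro a b h
    rw [hmemN] at h ⊢
    rwa [Finset.pair_comm]
  have hfilter_eq : ∀ a, E.filter (fun e => a ∈ e) = (N a).image (fun b => ({a, b} : Finset α)) := by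
    intro a
    ext e
    simp only [Finset.mem_filter, Finset.mem_image]
    constructor
    · rintro ⟨heE, hae⟩
      obtain ⟨y, hy, rfl⟩ := edge_eq_pair (h2 e heE) hae
      exact ⟨y, (hmemN a y).2 heE, rfl⟩
    · rintro ⟨b, hb, rfl⟩
      exact ⟨(hmemN a b).1 hb, by simp⟩
  have hdeg : ∀ a, (E.filter (fun e => a ∈ e)).card = (N a).card := by
    intro a
    rw [hfilter_eq a]
    rw [Finset.card_image_of_injOn]
    intro b hb c hc hbc
    simp only [Finset.mem_coe] at hb hc
    have hba : b ≠ a := fun h => hNself a (h ▸ hb)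
    have hbc' : ({a, b} : Finset α) = {a, c} := hbc
    have : b ∈ ({a, c} : Finset α) := hbc' ▸ (by simp : b ∈ ({a, b} : Finset α))
    simp only [Finset.mem_insert, Finset.mem_singleton] at this
    tauto
  -- choose vertex of maximum degree
  have hαne : Nonempty α := by
    obtain ⟨e, he⟩ := hne
    have : e.card = 2 := h2 e he
    have : e.Nonempty := Finset.card_pos.mp (by omega)
    exact ⟨this.choose⟩
  obtain ⟨v, -, hvmax⟩ := Finset.exists_max_image (univ : Finset α) (fun a => (N a).card)
    (Finset.univ_nonempty)
  set Nv := N v with hNv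
  set d := Nv.card with hd
  have hvmax' : ∀ a, (N a).card ≤ d := fun a => hvmax a (Finset.mem_univ a)
  -- d ≥ 1
  have hd1 : 1 ≤ d := by
    obtain ⟨e, he⟩ := hne
    have hc := h2 e he
    have : e.Nonempty := Finset.card_pos.mp (by omega)
    obtain ⟨a, ha⟩ := this
    obtain ⟨y, hy, rfl⟩ := edge_eq_pair hc ha
    have : y ∈ N a := (hmemN a y).2 he
    have : 1 ≤ (N a).card := Finset.card_pos.mpr ⟨y, this⟩
    exact le_trans this (hvmax' a)
  -- d ≤ s : Nv is escaping
  have hdles : d ≤ s := by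
    apply hesc
    intro w hw
    exact ⟨v, hNself v, by rw [Finset.pair_comm]; exact (hmemN v w).1 hw⟩
  -- partition of E
  set E1 := E.filter (fun e => v ∈ e) with hE1
  set Erest := E.filter (fun e => v ∉ e) with hErest
  set E2 := Erest.filter (fun e => e ⊆ Nv) with hE2
  set E34 := Erest.filter (fun e => ¬ e ⊆ Nv) with hE34
  set E3 := E34.filter (fun e => (e ∩ Nv).Nonempty) with hE3
  set E4 := E34.filter (fun e => ¬ (e ∩ Nv).Nonempty) with hE4
  have hcard_split : E.card = E1.card + (E2.card + (E3.card + E4.card)) := by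
    rw [hE4, hE3, Finset.card_filter_add_card_filter_not]
    rw [hE34, hE2, Finset.card_filter_add_card_filter_not]
    rw [hErest, hE1, Finset.card_filter_add_card_filter_not]
  have hcardE1 : E1.card = d := hdeg v
  -- E3 analysis
  set F : α → Finset (Finset α) := fun x => E3.filter (fun e => x ∈ e) with hF
  have hE3mem : ∀ e ∈ E3, e ∈ E ∧ v ∉ e ∧ ¬ e ⊆ Nv ∧ (e ∩ Nv).Nonempty := by
    intro e he
    simp only [hE3, hE34, hErest, Finset.mem_filter] at he
    tauto
  have hpair_eq : ∀ e ∈ E, ∀ x y : α, x ∈ e → y ∈ e → x ≠ y → e = {x, y} := by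
    intro e he x y hx hy hxy
    have hsub : ({x, y} : Finset α) ⊆ e := by
      intro z hz; simp only [Finset.mem_insert, Finset.mem_singleton] at hz
      rcases hz with rfl | rfl <;> assumption
    have hc2 : ({x, y} : Finset α).card = 2 := by
      rw [Finset.card_insert_of_notMem (by simp [hxy]), Finset.card_singleton]
    exact (Finset.eq_of_subset_of_card_le hsub (by rw [h2 e he, hc2])).symm
  have hE3biU : E3 = Nv.biUnion F := by
    ext e
    simp only [Finset.mem_biUnion, hF, Finset.mem_filter]
    constructor
    · intro he
      obtain ⟨-, -, -, x, hx⟩ := hE3mem e he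
      rw [Finset.mem_inter] at hx
      exact ⟨x, hx.2, he, hx.1⟩
    · rintro ⟨x, -, he, -⟩; exact he
  have hFdisj : ∀ x ∈ Nv, ∀ y ∈ Nv, x ≠ y → Disjoint (F x) (F y) := by
    intro x hx y hy hxy
    rw [Finset.disjoint_left]
    intro e hex hey
    simp only [hF, Finset.mem_filter] at hex hey
    obtain ⟨heE, -, hnsub, -⟩ := hE3mem e hex.1
    have := hpair_eq e heE x y hex.2 hey.2 hxy
    apply hnsub
    rw [this]
    intro z hz
    simp only [Finset.mem_insert, Finset.mem_singleton] at hz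
    rcases hz with rfl | rfl <;> assumption
  set out : α → ℕ := fun x => (F x).card with hout
  have hE3card : E3.card = ∑ x ∈ Nv, out x := by
    rw [hE3biU]; exact Finset.card_biUnion hFdisj
  set Ox : α → Finset α := fun x => (F x).biUnion (fun e => e.erase x) with hOx
  have hOxmem : ∀ x ∈ Nv, ∀ y ∈ Ox x,
      y ≠ x ∧ y ∉ Nv ∧ y ≠ v ∧ ({y, x} : Finset α) ∈ E ∧ ({x, y} : Finset α) ∈ E := by
    intro x hx y hy
    simp only [hOx, Finset.mem_biUnion] at hy
    obtain ⟨e, heF, hye⟩ := hy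
    rw [Finset.mem_erase] at hye
    simp only [hF, Finset.mem_filter] at heF
    obtain ⟨heE, -, hnsub, -⟩ := hE3mem e heF.1
    have hexy : e = {x, y} := hpair_eq e heE x y heF.2 hye.2 (Ne.symm hye.1)
    have hyNv : y ∉ Nv := by
      intro hyn
      apply hnsub
      rw [hexy]
      intro z hz
      simp only [Finset.mem_insert, Finset.mem_singleton] at hz
      rcases hz with rfl | rfl <;> assumption
    have hyv : y ≠ v := by
      rintro rfl
      exact (hE3mem e heF.1).2.1 hye.2
    refine ⟨hye.1, hyNv, hyv, ?_, hexy ▸ heE⟩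
    rw [Finset.pair_comm]; exact hexy ▸ heE
  have hOxcard : ∀ x ∈ Nv, (Ox x).card = out x := by
    intro x hx
    rw [hOx]
    rw [Finset.card_biUnion]
    · rw [hout]
      have hone : ∀ e ∈ F x, (e.erase x).card = 1 := by
        intro e he
        simp only [hF, Finset.mem_filter] at he
        rw [Finset.card_erase_of_mem he.2, h2 e (hE3mem e he.1).1]
      rw [Finset.sum_congr rfl hone, Finset.sum_const, smul_eq_mul, mul_one]
    · intro e he e' he' hee'
      simp only [Function.onFun, Finset.mem_coe] at he he' ⊢
      rw [Finset.disjoint_left]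
      intro y hye hye'
      rw [Finset.mem_erase] at hye hye'
      simp only [hF, Finset.mem_filter] at he he'
      apply hee'
      rw [hpair_eq e (hE3mem e he.1).1 x y he.2 hye.2 (Ne.symm hye.1),
        hpair_eq e' (hE3mem e' he'.1).1 x y he'.2 hye'.2 (Ne.symm hye'.1)]
  -- the escaping set W_x
  have hWx : ∀ x ∈ Nv, (d - 1) + out x ≤ s := by
    intro x hx
    have hdisj : Disjoint (Nv.erase x) (Ox x) := by
      rw [Finset.disjoint_left]
      intro y hy hy2
      exact (hOxmem x hx y hy2).2.1 (Finset.mem_of_mem_erase hy)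
    have hcard : ((Nv.erase x) ∪ Ox x).card = (d - 1) + out x := by
      rw [Finset.card_union_of_disjoint hdisj, Finset.card_erase_of_mem hx, hOxcard x hx]
    rw [← hcard]
    apply hesc
    intro w hw
    rw [Finset.mem_union] at hw
    rcases hw with hw | hw
    · refine ⟨v, ?_, ?_⟩
      · rw [Finset.mem_union]
        push_neg
        exact ⟨fun h => hNself v (Finset.mem_of_mem_erase h),
          fun h => (hOxmem x hx v h).2.2.1 rfl⟩
      · rw [Finset.pair_comm]
        exact (hmemN v w).1 (Finset.mem_of_mem_erase hw)
    · refine ⟨x, ?_, ?_⟩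
      · rw [Finset.mem_union]
        push_neg
        exact ⟨fun h => (Finset.mem_erase.mp h).1 rfl,
          fun h => (hOxmem x hx x h).1 rfl⟩
      · exact (hOxmem x hx w hw).2.2.2.1
  -- complete vertices
  set Cpred : α → Prop := fun x => ∀ y ∈ Nv.erase x, ({x, y} : Finset α) ∈ E with hCpred
  have hWx2 : ∀ x ∈ Nv, Cpred x → d + out x ≤ s := by
    intro x hx hcx
    have hdisj : Disjoint (Nv.erase x) (Ox x) := by
      rw [Finset.disjoint_left]
      intro y hy hy2
      exact (hOxmem x hx y hy2).2.1 (Finset.mem_of_mem_erase hy)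
    have hvnotmem : v ∉ (Nv.erase x) ∪ Ox x := by
      rw [Finset.mem_union]
      push_neg
      exact ⟨fun h => hNself v (Finset.mem_of_mem_erase h),
        fun h => (hOxmem x hx v h).2.2.1 rfl⟩
    have hcard : (insert v ((Nv.erase x) ∪ Ox x)).card = d + out x := by
      rw [Finset.card_insert_of_notMem hvnotmem,
        Finset.card_union_of_disjoint hdisj, Finset.card_erase_of_mem hx, hOxcard x hx]
      omega
    rw [← hcard]
    apply hesc
    have hxnotmem : x ∉ insert v ((Nv.erase x) ∪ Ox x) := by
      simp only [Finset.mem_insert, Finset.mem_union]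
      push_neg
      refine ⟨fun h => hNself v (by rwa [h] at hx), fun h => (Finset.mem_erase.mp h).1 rfl,
        fun h => (hOxmem x hx x h).1 rfl⟩
    intro w hw
    simp only [Finset.mem_insert, Finset.mem_union] at hw
    refine ⟨x, hxnotmem, ?_⟩
    rcases hw with hw | hw | hw
    · rw [hw]; exact (hmemN v x).1 hx
    · rw [Finset.pair_comm]
      exact hcx w hw
    · exact (hOxmem x hx w hw).2.2.2.1
  set Compl := Nv.filter (fun x => Cpred x) with hCompl
  set NonE := (Nv.powersetCard 2).filter (fun p => p ∉ E) with hNonE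
  have hIncompl : d ≤ 2 * NonE.card + Compl.card := by
    have hsplit : (Nv.filter (fun x => ¬ Cpred x)).card + Compl.card = d := by
      rw [hCompl, add_comm, Finset.card_filter_add_card_filter_not]
    have hsub : Nv.filter (fun x => ¬ Cpred x) ⊆ NonE.biUnion id := by
      intro x hx
      rw [Finset.mem_filter] at hx
      simp only [hCpred] at hx
      push_neg at hx
      obtain ⟨y, hy, hynE⟩ := hx.2
      rw [Finset.mem_biUnion]
      refine ⟨{x, y}, ?_, by simp⟩
      rw [hNonE, Finset.mem_filter, Finset.mem_powersetCard]
      refine ⟨⟨?_, ?_⟩, hynE⟩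
      · intro z hz
        simp only [Finset.mem_insert, Finset.mem_singleton] at hz
        rcases hz with rfl | rfl
        · exact hx.1
        · exact Finset.mem_of_mem_erase hy
      · rw [Finset.card_insert_of_notMem (by simp [Ne.symm (Finset.mem_erase.mp hy).1]),
          Finset.card_singleton]
    have hbound : (NonE.biUnion id).card ≤ 2 * NonE.card := by
      calc (NonE.biUnion id).card ≤ ∑ p ∈ NonE, (id p).card := Finset.card_biUnion_le
        _ = ∑ p ∈ NonE, 2 := by
            apply Finset.sum_congr rfl
            intro p hp
            rw [hNonE, Finset.mem_filter, Finset.mem_powersetCard] at hp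
            exact hp.1.2
        _ = 2 * NonE.card := by rw [Finset.sum_const, smul_eq_mul, mul_comm]
    have := Finset.card_le_card hsub
    omega
  have hE2NonE : 2 * E2.card + 2 * NonE.card + d = d * d := by
    have hEeq : E2 = (Nv.powersetCard 2).filter (fun p => p ∈ E) := by
      ext e
      simp only [hE2, hErest, Finset.mem_filter, Finset.mem_powersetCard]
      constructor
      · rintro ⟨⟨heE, -⟩, hsub⟩
        exact ⟨⟨hsub, h2 e heE⟩, heE⟩
      · rintro ⟨⟨hsub, -⟩, heE⟩
        exact ⟨⟨heE, fun hv => hNself v (hsub hv)⟩, hsub⟩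
    have hsum : E2.card + NonE.card = d.choose 2 := by
      rw [hEeq, hNonE, Finset.card_filter_add_card_filter_not,
        Finset.card_powersetCard]
    have h2ch : 2 * d.choose 2 = d * (d - 1) := by
      rw [Nat.choose_two_right]
      rw [Nat.mul_div_cancel']
      have : d * (d-1) = (d-1) * ((d-1)+1) := by
        rw [Nat.sub_add_cancel hd1]; ring
      rw [this]
      exact (Nat.even_mul_succ_self (d-1)).two_dvd
    have hmulpred : d * (d - 1) + d = d * d := by
      obtain ⟨c, hc⟩ : ∃ c, d = c + 1 := ⟨d - 1, by omega⟩
      rw [hc]; simp [Nat.add_sub_cancel]; ring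
    omega
  -- E4 induction
  have hE4mem : ∀ e ∈ E4, e ∈ E ∧ v ∉ e ∧ e ∩ Nv = ∅ := by
    intro e he
    simp only [hE4, hE34, hErest, Finset.mem_filter, Finset.not_nonempty_iff_eq_empty] at he
    tauto
  have hesc4 : ∀ W : Finset α, IsEsc E4 W → W.card ≤ s - d := by
    intro W hW
    have hWout : ∀ w ∈ W, w ∉ Nv ∧ w ≠ v := by
      intro w hw
      obtain ⟨b, -, hbe⟩ := hW w hw
      obtain ⟨heE, hv, hint⟩ := hE4mem _ hbe
      constructor
      · intro hwn
        have : w ∈ ({w, b} : Finset α) ∩ Nv := by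
          rw [Finset.mem_inter]; exact ⟨by simp, hwn⟩
        rw [hint] at this; simp at this
      · rintro rfl; exact hv (by simp)
    have hdisj : Disjoint W Nv := by
      rw [Finset.disjoint_left]; intro w hw; exact (hWout w hw).1
    have : (W ∪ Nv).card ≤ s := by
      apply hesc
      intro w hw
      rw [Finset.mem_union] at hw
      rcases hw with hw | hw
      · obtain ⟨b, hbW, hbe⟩ := hW w hw
        obtain ⟨heE, hv, hint⟩ := hE4mem _ hbe
        refine ⟨b, ?_, heE⟩
        rw [Finset.mem_union]
        push_neg
        refine ⟨hbW, ?_⟩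
        intro hbn
        have : b ∈ ({w, b} : Finset α) ∩ Nv := by
          rw [Finset.mem_inter]; exact ⟨by simp, hbn⟩
        rw [hint] at this; simp at this
      · refine ⟨v, ?_, ?_⟩
        · rw [Finset.mem_union]
          push_neg
          exact ⟨fun h => (hWout v h).2 rfl, hNself v⟩
        · rw [Finset.pair_comm]
          exact (hmemN v w).1 hw
    rw [Finset.card_union_of_disjoint hdisj] at this
    omega
  have hE4sub : ∀ e ∈ E4, e.card = 2 := fun e he => h2 e (hE4mem e he).1
  have hIH : 2 * E4.card ≤ (s - d) * ((s - d) + 2) := by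
    exact IH (s - d) (by omega) E4 hE4sub hesc4
  -- the per-x sum bound
  have hsumE3 : E3.card + d * d + Compl.card ≤ (s + 1) * d := by
    have hper : ∀ x ∈ Nv, out x + d + (if Cpred x then 1 else 0) ≤ s + 1 := by
      intro x hx
      by_cases hc : Cpred x
      · rw [if_pos hc]; have := hWx2 x hx hc; omega
      · rw [if_neg hc]; have := hWx x hx; omega
    calc E3.card + d * d + Compl.card
        = ∑ x ∈ Nv, (out x + d + (if Cpred x then 1 else 0)) := by
          rw [Finset.sum_add_distrib, Finset.sum_add_distrib, hE3card, Finset.sum_const,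
            smul_eq_mul, hCompl, Finset.card_filter]
      _ ≤ ∑ x ∈ Nv, (s + 1) := Finset.sum_le_sum hper
      _ = (s + 1) * d := by rw [Finset.sum_const, smul_eq_mul, mul_comm]
  -- final arithmetic
  obtain ⟨a, ha⟩ : ∃ a, s = a + d := ⟨s - d, by omega⟩
  subst ha
  have ha4 : 2 * E4.card ≤ a * a + 2 * a := by
    have : a + d - d = a := by omega
    rw [this] at hIH
    calc 2 * E4.card ≤ a * (a + 2) := hIH
      _ = a * a + 2 * a := by ring
  have ha3 : E3.card + d * d + Compl.card ≤ a * d + d * d + d := by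
    calc E3.card + d * d + Compl.card ≤ (a + d + 1) * d := hsumE3
      _ = a * d + d * d + d := by ring
  have hgoal : (a + d) * (a + d + 2) = a * a + 2 * (a * d) + d * d + 2 * a + 2 * d := by ring
  rw [hgoal, hcard_split, hcardE1]
  linarith [ha4, ha3, hE2NonE, hIncompl]


theorem upper_bound (t n : ℕ) (ht : 1 ≤ t) (H : Finset (Finset (Fin n)))
    (h3 : ∀ e ∈ H, e.card = 3) (hns : ¬ HasStarTrace t H) :
    6 * H.card ≤ n * (t ^ 2 - 1) := by
  classical
  set Ev : Fin n → Finset (Finset (Fin n)) :=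
    fun v => (H.filter (fun e => v ∈ e)).image (fun e => e.erase v) with hEv
  have hEvcard : ∀ v, (Ev v).card = (H.filter (fun e => v ∈ e)).card := by
    intro v
    rw [hEv]
    apply Finset.card_image_of_injOn
    intro e he e' he' hee
    simp only [Finset.mem_coe, Finset.mem_filter] at he he'
    have hee' : e.erase v = e'.erase v := hee
    rw [← Finset.insert_erase he.2, ← Finset.insert_erase he'.2, hee']
  have hEv2 : ∀ v, ∀ p ∈ Ev v, p.card = 2 := by
    intro v p hp
    rw [hEv, Finset.mem_image] at hp
    obtain ⟨e, he, rfl⟩ := hp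
    rw [Finset.mem_filter] at he
    rw [Finset.card_erase_of_mem he.2, h3 e he.1]
  have hEvmem : ∀ v, ∀ p ∈ Ev v, v ∉ p ∧ insert v p ∈ H := by
    intro v p hp
    rw [hEv, Finset.mem_image] at hp
    obtain ⟨e, he, rfl⟩ := hp
    rw [Finset.mem_filter] at he
    exact ⟨Finset.notMem_erase v e, by rw [Finset.insert_erase he.2]; exact he.1⟩
  -- escaping sets are small
  have hesc : ∀ v : Fin n, ∀ W, IsEsc (Ev v) W → W.card ≤ t - 1 := by
    intro v W hW
    by_contra hcon
    push_neg at hcon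
    have hWt : t ≤ W.card := by omega
    obtain ⟨W', hW'sub, hW'card⟩ := Finset.exists_subset_card_eq hWt
    have hW'esc : IsEsc (Ev v) W' := by
      intro w hw
      obtain ⟨b, hb, hbe⟩ := hW w (hW'sub hw)
      exact ⟨b, fun h => hb (hW'sub h), hbe⟩
    -- build a star trace
    apply hns
    have hWiso := W'.orderIsoOfFin hW'card
    set w : Fin t → Fin n := fun i => (hWiso i : Fin n) with hwdef
    have hwinj : Function.Injective w := by
      intro i j hij
      have := Subtype.ext hij
      exact hWiso.injective this
    have hwmem : ∀ i, w i ∈ W' := fun i => (hWiso i).2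
    have hwim : Finset.image w Finset.univ = W' := by
      apply Finset.eq_of_subset_of_card_le
      · intro z hz
        rw [Finset.mem_image] at hz
        obtain ⟨i, -, rfl⟩ := hz
        exact hwmem i
      · rw [Finset.card_image_of_injective _ hwinj, Finset.card_univ, Fintype.card_fin, hW'card]
    have hchoice : ∀ i : Fin t, ∃ b, b ∉ W' ∧ ({w i, b} : Finset (Fin n)) ∈ Ev v :=
      fun i => hW'esc (w i) (hwmem i)
    choose b hbW hbE using hchoice
    set f : Fin t → Finset (Fin n) := fun i => insert v ({w i, b i} : Finset (Fin n)) with hfdef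
    have hvnot : ∀ i, v ∉ ({w i, b i} : Finset (Fin n)) := fun i => (hEvmem v _ (hbE i)).1
    have hfH : ∀ i, f i ∈ H := fun i => (hEvmem v _ (hbE i)).2
    have hbne : ∀ i, b i ≠ w i := by
      intro i h
      have := hEv2 v _ (hbE i)
      rw [h] at this
      simp at this
    have hwv : ∀ i, w i ≠ v := by
      intro i h
      exact hvnot i (by rw [h]; simp)
    have hbv : ∀ i, b i ≠ v := by
      intro i h
      exact hvnot i (by rw [h]; simp)
    refine ⟨v, w, f, hwinj, hwv, ?_, hfH, ?_⟩
    · intro i j hij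
      have hwi : w i ∈ f j := by
        rw [← hij, hfdef]; simp
      rw [hfdef] at hwi
      simp only [Finset.mem_insert, Finset.mem_singleton] at hwi
      rcases hwi with h | h | h
      · exact absurd h (hwv i)
      · exact hwinj h
      · exact absurd (h ▸ hwmem i) (hbW j)
    · intro i
      rw [hwim, hfdef]
      ext z
      simp only [Finset.mem_inter, Finset.mem_insert, Finset.mem_singleton]
      constructor
      · rintro ⟨h1, h2⟩
        rcases h1 with rfl | rfl | rfl
        · exact Or.inl rfl
        · exact Or.inr rfl
        · rcases h2 with h | h
          · exact absurd h (hbv i)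
          · exact absurd h (hbW i)
      · rintro (rfl | rfl)
        · exact ⟨Or.inl rfl, Or.inl rfl⟩
        · exact ⟨Or.inr (Or.inl rfl), Or.inr (hwmem i)⟩
  -- apply lemmaV
  have hbound : ∀ v : Fin n, 2 * (Ev v).card ≤ t ^ 2 - 1 := by
    intro v
    have := lemmaV (t - 1) (Ev v) (hEv2 v) (hesc v)
    have harith : (t - 1) * ((t - 1) + 2) = t ^ 2 - 1 := by
      obtain ⟨c, rfl⟩ : ∃ c, t = c + 1 := ⟨t - 1, by omega⟩
      have h1 : (c + 1) ^ 2 = c * c + 2 * c + 1 := by ring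
      have h2 : (c + 1 - 1) * ((c + 1 - 1) + 2) = c * c + 2 * c := by
        simp [Nat.add_sub_cancel]; ring
      omega
    rwa [harith] at this
  -- double counting
  have hsum : ∑ v : Fin n, (H.filter (fun e => v ∈ e)).card = 3 * H.card := by
    have : ∀ v : Fin n, (H.filter (fun e => v ∈ e)).card
        = ∑ e ∈ H, (if v ∈ e then 1 else 0) := fun v => Finset.card_filter _ _
    rw [Finset.sum_congr rfl (fun v _ => this v), Finset.sum_comm]
    have he3 : ∀ e ∈ H, ∑ v : Fin n, (if v ∈ e then 1 else 0) = 3 := by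
      intro e he
      rw [← Finset.card_filter, Finset.filter_univ_mem]
      exact h3 e he
    rw [Finset.sum_congr rfl he3, Finset.sum_const, smul_eq_mul, mul_comm]
  calc 6 * H.card = ∑ v : Fin n, 2 * (H.filter (fun e => v ∈ e)).card := by
        rw [← Finset.mul_sum, hsum]; ring
    _ ≤ ∑ v : Fin n, (t ^ 2 - 1) := by
        apply Finset.sum_le_sum
        intro v _
        rw [← hEvcard v]
        exact hbound v
    _ = n * (t ^ 2 - 1) := by
        rw [Finset.sum_const, smul_eq_mul, Finset.card_univ, Fintype.card_fin]

/-! ### Steiner triple systems -/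

def IsSTSlike (v : ℕ) (T : Finset (Finset (Fin v))) : Prop :=
  (∀ e ∈ T, e.card = 3) ∧ (∀ a b : Fin v, a ≠ b → ∃ e ∈ T, a ∈ e ∧ b ∈ e) ∧
    6 * T.card ≤ v * (v - 1)

lemma card3 {γ : Type*} [DecidableEq γ] {a b c : γ} (h1 : a ≠ b) (h2 : a ≠ c) (h3 : b ≠ c) :
    ({a, b, c} : Finset γ).card = 3 := by
  rw [Finset.card_insert_of_notMem (by simp [h1, h2]),
    Finset.card_insert_of_notMem (by simp [h3]), Finset.card_singleton]

lemma zmod3_ne : ∀ i : ZMod 3, i ≠ i + 1 := by decide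
lemma zmod3_cases : ∀ i : ZMod 3, i = 0 ∨ i = 1 ∨ i = 2 := by decide
lemma zmod3_tri : ∀ i j : ZMod 3, j = i ∨ j = i + 1 ∨ i = j + 1 := by decide

lemma sts_transfer {β : Type*} [Fintype β] [DecidableEq β] (v : ℕ)
    (hcard : Fintype.card β = v) (T : Finset (Finset β))
    (h3 : ∀ e ∈ T, e.card = 3) (hcov : ∀ a b : β, a ≠ b → ∃ e ∈ T, a ∈ e ∧ b ∈ e)
    (hct : 6 * T.card ≤ v * (v - 1)) : ∃ T' : Finset (Finset (Fin v)), IsSTSlike v T' := by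
  classical
  let E := Fintype.equivFinOfCardEq hcard
  refine ⟨T.image (fun e => e.image E), ?_, ?_, ?_⟩
  · intro e he
    rw [Finset.mem_image] at he
    obtain ⟨e', he', rfl⟩ := he
    rw [Finset.card_image_of_injective _ E.injective]
    exact h3 e' he'
  · intro a b hab
    obtain ⟨e, he, ha, hb⟩ := hcov (E.symm a) (E.symm b) (fun h => hab (by
      have := congrArg E h; simpa using this))
    refine ⟨e.image E, Finset.mem_image_of_mem _ he, ?_, ?_⟩
    · have := Finset.mem_image_of_mem E ha
      simpa using this
    · have := Finset.mem_image_of_mem E hb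
      simpa using this
  · calc 6 * (T.image (fun e => e.image E)).card ≤ 6 * T.card :=
        Nat.mul_le_mul_left _ Finset.card_image_le
      _ ≤ v * (v - 1) := hct

/-- a generic "2-to-1 image" cardinality bound. -/
lemma two_mul_image_le {γ δ : Type*} [DecidableEq γ] [DecidableEq δ]
    (S : Finset γ) (f : γ → δ)
    (hfib : ∀ q ∈ S, ∃ q' ∈ S, q' ≠ q ∧ f q' = f q) :
    2 * (S.image f).card ≤ S.card := by
  classical
  rw [Finset.card_eq_sum_card_image f S]
  have : ∀ b ∈ S.image f, 2 ≤ (S.filter (fun x => f x = b)).card := by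
    intro b hb
    rw [Finset.mem_image] at hb
    obtain ⟨q, hq, rfl⟩ := hb
    obtain ⟨q', hq', hne, heq⟩ := hfib q hq
    have hsub : ({q', q} : Finset γ) ⊆ S.filter (fun x => f x = f q) := by
      intro z hz
      simp only [Finset.mem_insert, Finset.mem_singleton] at hz
      rcases hz with rfl | rfl
      · exact Finset.mem_filter.mpr ⟨hq', heq⟩
      · exact Finset.mem_filter.mpr ⟨hq, rfl⟩
    calc 2 = ({q', q} : Finset γ).card := by
          rw [Finset.card_insert_of_notMem (by simp [hne]), Finset.card_singleton]
      _ ≤ _ := Finset.card_le_card hsub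
  calc 2 * (S.image f).card = ∑ _b ∈ S.image f, 2 := by
        rw [Finset.sum_const, smul_eq_mul, mul_comm]
    _ ≤ ∑ b ∈ S.image f, (S.filter (fun x => f x = b)).card := Finset.sum_le_sum this

/-! ### Bose construction, `v = 3 m`, `m` odd -/

section Bose

variable (m : ℕ) [NeZero m]

def boseVert : Finset (Finset (ZMod m × ZMod 3)) :=
  (univ : Finset (ZMod m)).image
    (fun x => ({(x, 0), (x, 1), (x, 2)} : Finset (ZMod m × ZMod 3)))

def boseCross : Finset (Finset (ZMod m × ZMod 3)) :=
  (((univ : Finset (ZMod m)).offDiag ×ˢ (univ : Finset (ZMod 3))).image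
    (fun q => ({(q.1.1, q.2), (q.1.2, q.2),
      ((((m + 1) / 2 : ℕ) : ZMod m) * (q.1.1 + q.1.2), q.2 + 1)} : Finset (ZMod m × ZMod 3))))

def boseT : Finset (Finset (ZMod m × ZMod 3)) := boseVert m ∪ boseCross m

variable {m}

lemma bose_half (hm : m % 2 = 1) :
    (2 : ZMod m) * (((m + 1) / 2 : ℕ) : ZMod m) = 1 := by
  have h1 : ((2 * ((m + 1) / 2) : ℕ) : ZMod m) = ((m + 1 : ℕ) : ZMod m) := by
    congr 1
    omega
  push_cast at h1
  rw [ZMod.natCast_self] at h1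
  simpa using h1

lemma boseT_card3 : ∀ e ∈ boseT m, e.card = 3 := by
  intro e he
  rw [boseT, Finset.mem_union] at he
  rcases he with he | he
  · rw [boseVert, Finset.mem_image] at he
    obtain ⟨x, -, rfl⟩ := he
    exact card3 (by simp [Prod.ext_iff]; try decide) (by simp [Prod.ext_iff]; try decide)
      (by simp [Prod.ext_iff]; try decide)
  · rw [boseCross, Finset.mem_image] at he
    obtain ⟨q, hq, rfl⟩ := he
    rw [Finset.mem_product, Finset.mem_offDiag] at hq
    obtain ⟨⟨-, -, hne⟩, -⟩ := hq
    exact card3 (by simp [Prod.ext_iff, hne]) (by simp [Prod.ext_iff]) (by simp [Prod.ext_iff])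

lemma bose_cross_mem {x y : ZMod m} (hxy : x ≠ y) (i : ZMod 3) :
    ({(x, i), (y, i), ((((m + 1) / 2 : ℕ) : ZMod m) * (x + y), i + 1)} :
      Finset (ZMod m × ZMod 3)) ∈ boseT m := by
  rw [boseT, Finset.mem_union]
  right
  rw [boseCross, Finset.mem_image]
  exact ⟨((x, y), i), by
    rw [Finset.mem_product, Finset.mem_offDiag]
    exact ⟨⟨Finset.mem_univ _, Finset.mem_univ _, hxy⟩, Finset.mem_univ _⟩, rfl⟩

lemma bose_cover (hm : m % 2 = 1) :
    ∀ a b : ZMod m × ZMod 3, a ≠ b → ∃ e ∈ boseT m, a ∈ e ∧ b ∈ e := by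
  have h2c := bose_half (m := m) hm
  set c : ZMod m := (((m + 1) / 2 : ℕ) : ZMod m) with hc
  -- helper : consecutive levels
  have hcons : ∀ (x z : ZMod m) (i : ZMod 3),
      ∃ e ∈ boseT m, (x, i) ∈ e ∧ (z, i + 1) ∈ e := by
    intro x z i
    by_cases hzx : z = x
    · subst hzx
      refine ⟨{(z, 0), (z, 1), (z, 2)}, ?_, ?_, ?_⟩
      · rw [boseT, Finset.mem_union]
        left
        rw [boseVert, Finset.mem_image]
        exact ⟨z, Finset.mem_univ _, rfl⟩
      · rcases zmod3_cases i with h | h | h <;> subst h <;> simp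
      · rcases zmod3_cases (i + 1) with h | h | h <;> rw [h] <;> simp
    · set y : ZMod m := 2 * z - x with hy
      have hyx : y ≠ x := by
        intro h
        apply hzx
        have h2z : 2 * z = 2 * x := by
          rw [hy] at h
          linear_combination h
        calc z = 1 * z := (one_mul z).symm
          _ = (2 * c) * z := by rw [h2c]
          _ = c * (2 * z) := by ring
          _ = c * (2 * x) := by rw [h2z]
          _ = (2 * c) * x := by ring
          _ = x := by rw [h2c]; ring
      have hz : c * (x + y) = z := by
        rw [hy]
        calc c * (x + (2 * z - x)) = (2 * c) * z := by ring
          _ = z := by rw [h2c]; ring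
      refine ⟨_, bose_cross_mem (Ne.symm hyx) i, by simp, ?_⟩
      rw [hz]
      simp
  intro a b hab
  obtain ⟨x, i⟩ := a
  obtain ⟨z, j⟩ := b
  rcases zmod3_tri i j with h | h | h
  · have hxz : x ≠ z := fun hh => hab (by rw [hh, h])
    refine ⟨_, bose_cross_mem hxz j, ?_, ?_⟩
    · rw [h]; simp
    · simp
  · subst h
    exact hcons x z i
  · subst h
    obtain ⟨e, he, h1, h2⟩ := hcons z x j
    exact ⟨e, he, h2, h1⟩

lemma bose_count : 6 * (boseT m).card ≤ (3 * m) * (3 * m - 1) := by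
  have hvert : (boseVert m).card ≤ m := by
    calc (boseVert m).card ≤ (univ : Finset (ZMod m)).card := Finset.card_image_le
      _ = m := by rw [Finset.card_univ, ZMod.card]
  have hcross : 2 * (boseCross m).card ≤ 3 * (m * m - m) := by
    have hsrc : ((univ : Finset (ZMod m)).offDiag ×ˢ (univ : Finset (ZMod 3))).card
        = (m * m - m) * 3 := by
      rw [Finset.card_product, Finset.offDiag_card, Finset.card_univ, Finset.card_univ,
        ZMod.card, ZMod.card]
    have := two_mul_image_le ((univ : Finset (ZMod m)).offDiag ×ˢ (univ : Finset (ZMod 3)))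
      (fun q => ({(q.1.1, q.2), (q.1.2, q.2),
        ((((m + 1) / 2 : ℕ) : ZMod m) * (q.1.1 + q.1.2), q.2 + 1)} : Finset (ZMod m × ZMod 3)))
      ?_
    · rw [boseCross]
      omega
    · rintro ⟨⟨x, y⟩, l⟩ hq
      rw [Finset.mem_product, Finset.mem_offDiag] at hq
      obtain ⟨⟨-, -, hne⟩, -⟩ := hq
      refine ⟨((y, x), l), ?_, ?_, ?_⟩
      · rw [Finset.mem_product, Finset.mem_offDiag]
        exact ⟨⟨Finset.mem_univ _, Finset.mem_univ _, Ne.symm hne⟩, Finset.mem_univ _⟩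
      · simp [Prod.ext_iff]
        intro h
        exact absurd h (Ne.symm hne)
      · simp only
        rw [Finset.insert_comm]
        congr 2
        ring
  have hm1 : 1 ≤ m := Nat.one_le_iff_ne_zero.mpr (NeZero.ne m)
  have hunion : (boseT m).card ≤ (boseVert m).card + (boseCross m).card :=
    Finset.card_union_le _ _
  have hmm : m ≤ m * m := Nat.le_mul_of_pos_left m hm1
  calc 6 * (boseT m).card ≤ 6 * ((boseVert m).card + (boseCross m).card) :=
        Nat.mul_le_mul_left _ hunion
    _ = 6 * (boseVert m).card + 3 * (2 * (boseCross m).card) := by ring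
    _ ≤ 6 * m + 3 * (3 * (m * m - m)) := by
        have := Nat.mul_le_mul_left 6 hvert
        have := Nat.mul_le_mul_left 3 hcross
        omega
    _ ≤ (3 * m) * (3 * m - 1) := by
        have h1 : (3 * m) * (3 * m - 1) = 9 * (m * m) - 3 * m := by
          rw [Nat.mul_sub]
          ring_nf
        omega

lemma bose_sts (hm : m % 2 = 1) :
    ∃ T : Finset (Finset (Fin (3 * m))), IsSTSlike (3 * m) T := by
  apply sts_transfer (β := ZMod m × ZMod 3)
  · rw [Fintype.card_prod, ZMod.card, ZMod.card]; ring
  · exact boseT_card3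
  · exact bose_cover hm
  · have := bose_count (m := m)
    have hm1 : 1 ≤ m := Nat.one_le_iff_ne_zero.mpr (NeZero.ne m)
    exact this

end Bose

/-! ### Skolem construction, `v = 6 k + 1` -/

section Skolem

variable (k : ℕ) [NeZero (2 * k)]

abbrev SQ (k : ℕ) := ZMod (2 * k)

def sh (w : SQ k) : SQ k :=
  if w.val % 2 = 0 then ((w.val / 2 : ℕ) : SQ k) else ((k + w.val / 2 : ℕ) : SQ k)

def shinv (z : SQ k) : SQ k :=
  if z.val < k then ((2 * z.val : ℕ) : SQ k) else ((2 * (z.val - k) + 1 : ℕ) : SQ k)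

variable {k}

lemma sq_val_lt (z : SQ k) : z.val < 2 * k := ZMod.val_lt z

lemma sq_cast_val (z : SQ k) : ((z.val : ℕ) : SQ k) = z := ZMod.natCast_rightInverse z

lemma hk1 : 1 ≤ k := by
  have := NeZero.ne (2 * k)
  omega

lemma sh_shinv (z : SQ k) : sh k (shinv k z) = z := by
  have hzlt := sq_val_lt z
  have hk := hk1 (k := k)
  rw [shinv]
  split_ifs with h
  · have hv : ((2 * z.val : ℕ) : SQ k).val = 2 * z.val := ZMod.val_cast_of_lt (by omega)
    rw [sh, hv, if_pos (by omega)]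
    have h2 : 2 * z.val / 2 = z.val := by omega
    rw [h2, sq_cast_val]
  · have hv : ((2 * (z.val - k) + 1 : ℕ) : SQ k).val = 2 * (z.val - k) + 1 :=
      ZMod.val_cast_of_lt (by omega)
    rw [sh, hv, if_neg (by omega)]
    have h2 : k + (2 * (z.val - k) + 1) / 2 = z.val := by omega
    rw [h2, sq_cast_val]

lemma sh_low {x : SQ k} (h : x.val < k) : sh k (x + x) = x := by
  have hk := hk1 (k := k)
  have hv : (x + x).val = 2 * x.val := by
    rw [ZMod.val_add, Nat.mod_eq_of_lt (by omega)]
    omega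
  rw [sh, hv, if_pos (by omega)]
  have h2 : 2 * x.val / 2 = x.val := by omega
  rw [h2, sq_cast_val]

lemma sh_high {x : SQ k} (h : k ≤ x.val) : sh k (x + x) = ((x.val - k : ℕ) : SQ k) := by
  have hk := hk1 (k := k)
  have hxlt := sq_val_lt x
  have hv : (x + x).val = 2 * x.val - 2 * k := by
    rw [ZMod.val_add]
    rw [Nat.mod_eq_sub_mod (by omega), Nat.mod_eq_of_lt (by omega)]
    omega
  rw [sh, hv, if_pos (by omega)]
  congr 1
  omega

variable (k)

abbrev SP (k : ℕ) := Option (SQ k × ZMod 3)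

def skolemT1 : Finset (Finset (SP k)) :=
  (Finset.range k).image fun i =>
    ({some ((Nat.cast i : SQ k), 0), some ((Nat.cast i : SQ k), 1), some ((Nat.cast i : SQ k), 2)} :
      Finset (SP k))

def skolemT2 : Finset (Finset (SP k)) :=
  ((Finset.range k) ×ˢ (univ : Finset (ZMod 3))).image fun p =>
    ({none, some (((k + p.1 : ℕ) : SQ k), p.2), some (((p.1 : ℕ) : SQ k), p.2 + 1)} :
      Finset (SP k))

def skolemT3 : Finset (Finset (SP k)) :=
  (((univ : Finset (SQ k)).offDiag) ×ˢ (univ : Finset (ZMod 3))).image fun p =>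
    ({some (p.1.1, p.2), some (p.1.2, p.2), some (sh k (p.1.1 + p.1.2), p.2 + 1)} :
      Finset (SP k))

def skolemT : Finset (Finset (SP k)) := skolemT1 k ∪ skolemT2 k ∪ skolemT3 k

variable {k}

lemma skolemT_card3 : ∀ e ∈ skolemT k, e.card = 3 := by
  intro e he
  rw [skolemT, Finset.mem_union, Finset.mem_union] at he
  rcases he with (he | he) | he
  · rw [skolemT1, Finset.mem_image] at he
    obtain ⟨i, -, rfl⟩ := he
    exact card3 (by simp [Prod.ext_iff]; try decide) (by simp [Prod.ext_iff]; try decide)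
      (by simp [Prod.ext_iff]; try decide)
  · rw [skolemT2, Finset.mem_image] at he
    obtain ⟨p, -, rfl⟩ := he
    exact card3 (by simp) (by simp) (by simp [Prod.ext_iff, zmod3_ne p.2])
  · rw [skolemT3, Finset.mem_image] at he
    obtain ⟨p, hp, rfl⟩ := he
    rw [Finset.mem_product, Finset.mem_offDiag] at hp
    obtain ⟨⟨-, -, hne⟩, -⟩ := hp
    exact card3 (by simp [Prod.ext_iff, hne]) (by simp [Prod.ext_iff, zmod3_ne p.2])
      (by simp [Prod.ext_iff, zmod3_ne p.2])

lemma skolem_mem_T3 {x y : SQ k} (hxy : x ≠ y) (i : ZMod 3) :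
    ({some (x, i), some (y, i), some (sh k (x + y), i + 1)} : Finset (SP k)) ∈ skolemT k := by
  rw [skolemT, Finset.mem_union]
  right
  rw [skolemT3, Finset.mem_image]
  exact ⟨((x, y), i), by
    rw [Finset.mem_product, Finset.mem_offDiag]
    exact ⟨⟨Finset.mem_univ _, Finset.mem_univ _, hxy⟩, Finset.mem_univ _⟩, rfl⟩

lemma skolem_mem_T2 {i : ℕ} (hi : i < k) (l : ZMod 3) :
    ({none, some (((k + i : ℕ) : SQ k), l), some (((i : ℕ) : SQ k), l + 1)} :
      Finset (SP k)) ∈ skolemT k := by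
  rw [skolemT, Finset.mem_union]
  left
  rw [Finset.mem_union]
  right
  rw [skolemT2, Finset.mem_image]
  exact ⟨(i, l), by
    rw [Finset.mem_product]
    exact ⟨Finset.mem_range.mpr hi, Finset.mem_univ _⟩, rfl⟩

lemma skolem_mem_T1 {i : ℕ} (hi : i < k) :
    ({some ((i : SQ k), 0), some ((i : SQ k), 1), some ((i : SQ k), 2)} :
      Finset (SP k)) ∈ skolemT k := by
  rw [skolemT, Finset.mem_union]
  left
  rw [Finset.mem_union]
  left
  rw [skolemT1, Finset.mem_image]
  exact ⟨i, Finset.mem_range.mpr hi, rfl⟩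

lemma skolem_none_cover (x : SQ k) (i : ZMod 3) :
    ∃ e ∈ skolemT k, (none : SP k) ∈ e ∧ some (x, i) ∈ e := by
  have hxlt := sq_val_lt x
  by_cases h : x.val < k
  · refine ⟨_, skolem_mem_T2 (k := k) h (i - 1), by simp, ?_⟩
    have h1 : ((x.val : ℕ) : SQ k) = x := sq_cast_val x
    have h2 : i - 1 + 1 = i := by ring
    rw [h1, h2]
    simp
  · refine ⟨_, skolem_mem_T2 (k := k) (show x.val - k < k by omega) i, by simp, ?_⟩
    have h1 : ((k + (x.val - k) : ℕ) : SQ k) = x := by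
      have : k + (x.val - k) = x.val := by omega
      rw [this, sq_cast_val]
    rw [h1]
    simp

lemma skolem_cons_cover (x z : SQ k) (i : ZMod 3) :
    ∃ e ∈ skolemT k, some (x, i) ∈ e ∧ some (z, i + 1) ∈ e := by
  have hxlt := sq_val_lt x
  by_cases h1 : x.val < k ∧ z = x
  · refine ⟨_, skolem_mem_T1 (k := k) h1.1, ?_, ?_⟩
    · rw [sq_cast_val]
      rcases zmod3_cases i with h | h | h <;> rw [h] <;> simp
    · rw [sq_cast_val, h1.2]
      rcases zmod3_cases (i + 1) with h | h | h <;> rw [h] <;> simp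
  · by_cases h2 : k ≤ x.val ∧ z = ((x.val - k : ℕ) : SQ k)
    · refine ⟨_, skolem_mem_T2 (k := k) (show x.val - k < k by omega) i, ?_, ?_⟩
      · have hx : ((k + (x.val - k) : ℕ) : SQ k) = x := by
          have : k + (x.val - k) = x.val := by omega
          rw [this, sq_cast_val]
        rw [hx]
        simp
      · rw [← h2.2]
        simp
    · set b : SQ k := shinv k z - x with hb
      have hxb : x + b = shinv k z := by rw [hb]; ring
      have hshb : sh k (x + b) = z := by rw [hxb, sh_shinv]
      have hbx : x ≠ b := by
        intro hcon
        rw [← hcon] at hshb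
        by_cases hl : x.val < k
        · rw [sh_low hl] at hshb
          exact h1 ⟨hl, hshb.symm⟩
        · rw [sh_high (by omega)] at hshb
          exact h2 ⟨by omega, hshb.symm⟩
      refine ⟨_, skolem_mem_T3 (k := k) hbx i, by simp, ?_⟩
      rw [hshb]
      simp

lemma skolem_cover :
    ∀ a b : SP k, a ≠ b → ∃ e ∈ skolemT k, a ∈ e ∧ b ∈ e := by
  intro a b hab
  match a, b with
  | none, none => exact absurd rfl hab
  | none, some (x, i) => exact skolem_none_cover x i
  | some (x, i), none =>
      obtain ⟨e, he, h1, h2⟩ := skolem_none_cover x i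
      exact ⟨e, he, h2, h1⟩
  | some (x, i), some (z, j) =>
      rcases zmod3_tri i j with h | h | h
      · have hxz : x ≠ z := fun hh => hab (by rw [hh, h])
        refine ⟨_, skolem_mem_T3 hxz j, ?_, ?_⟩
        · rw [h]; simp
        · simp
      · subst h
        exact skolem_cons_cover x z i
      · subst h
        obtain ⟨e, he, h1, h2⟩ := skolem_cons_cover z x j
        exact ⟨e, he, h2, h1⟩

lemma skolem_count : 6 * (skolemT k).card ≤ (6 * k + 1) * (6 * k + 1 - 1) := by
  have hk := hk1 (k := k)
  have h1 : (skolemT1 k).card ≤ k := by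
    calc (skolemT1 k).card ≤ (Finset.range k).card := Finset.card_image_le
      _ = k := Finset.card_range k
  have h2 : (skolemT2 k).card ≤ k * 3 := by
    calc (skolemT2 k).card ≤ ((Finset.range k) ×ˢ (univ : Finset (ZMod 3))).card :=
          Finset.card_image_le
      _ = k * 3 := by rw [Finset.card_product, Finset.card_range, Finset.card_univ, ZMod.card]
  have h3 : 2 * (skolemT3 k).card ≤ (2 * k * (2 * k) - 2 * k) * 3 := by
    have hsrc : (((univ : Finset (SQ k)).offDiag) ×ˢ (univ : Finset (ZMod 3))).card
        = (2 * k * (2 * k) - 2 * k) * 3 := by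
      rw [Finset.card_product, Finset.offDiag_card, Finset.card_univ, Finset.card_univ,
        ZMod.card, ZMod.card]
    have := two_mul_image_le (((univ : Finset (SQ k)).offDiag) ×ˢ (univ : Finset (ZMod 3)))
      (fun p => ({some (p.1.1, p.2), some (p.1.2, p.2), some (sh k (p.1.1 + p.1.2), p.2 + 1)} :
        Finset (SP k))) ?_
    · rw [skolemT3]
      omega
    · rintro ⟨⟨x, y⟩, l⟩ hq
      rw [Finset.mem_product, Finset.mem_offDiag] at hq
      obtain ⟨⟨-, -, hne⟩, -⟩ := hq
      refine ⟨((y, x), l), ?_, ?_, ?_⟩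
      · rw [Finset.mem_product, Finset.mem_offDiag]
        exact ⟨⟨Finset.mem_univ _, Finset.mem_univ _, Ne.symm hne⟩, Finset.mem_univ _⟩
      · simp [Prod.ext_iff]
        intro h
        exact absurd h (Ne.symm hne)
      · simp only
        rw [Finset.insert_comm]
        congr 3
        ring
  have hu : (skolemT k).card ≤ (skolemT1 k).card + (skolemT2 k).card + (skolemT3 k).card := by
    calc (skolemT k).card ≤ (skolemT1 k ∪ skolemT2 k).card + (skolemT3 k).card :=
          Finset.card_union_le _ _
      _ ≤ (skolemT1 k).card + (skolemT2 k).card + (skolemT3 k).card := by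
          have := Finset.card_union_le (skolemT1 k) (skolemT2 k)
          omega
  have hgoal : (6 * k + 1) * (6 * k + 1 - 1) = 36 * (k * k) + 6 * k := by
    have : 6 * k + 1 - 1 = 6 * k := by omega
    rw [this]
    ring
  have hexp : (2 * k * (2 * k) - 2 * k) * 3 = 12 * (k * k) - 6 * k := by
    have h4 : 2 * k * (2 * k) = 4 * (k * k) := by ring
    rw [h4]
    omega
  rw [hgoal]
  rw [hexp] at h3
  have hkk : k ≤ k * k := Nat.le_mul_of_pos_left k (by omega)
  omega

lemma skolem_sts (hk : 1 ≤ k) :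
    ∃ T : Finset (Finset (Fin (6 * k + 1))), IsSTSlike (6 * k + 1) T := by
  apply sts_transfer (β := SP k)
  · rw [Fintype.card_option, Fintype.card_prod, ZMod.card, ZMod.card]
    ring
  · exact skolemT_card3
  · exact skolem_cover
  · exact skolem_count

end Skolem

/-! ### existence of STS -/

theorem sts_exists (v : ℕ) (h3v : 3 ≤ v) (hmod : v % 6 = 1 ∨ v % 6 = 3) :
    ∃ T : Finset (Finset (Fin v)), IsSTSlike v T := by
  rcases hmod with h | h
  · obtain ⟨kk, hk⟩ : ∃ kk, v = 6 * kk + 1 := ⟨v / 6, by omega⟩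
    haveI : NeZero (2 * kk) := ⟨by omega⟩
    subst hk
    exact skolem_sts (by omega)
  · obtain ⟨mm, hm⟩ : ∃ mm, v = 3 * mm := ⟨v / 3, by omega⟩
    haveI : NeZero mm := ⟨by omega⟩
    subst hm
    exact bose_sts (by omega)

lemma two_choose2 (v : ℕ) : 2 * v.choose 2 = v * (v - 1) := by
  rcases Nat.eq_zero_or_pos v with rfl | hv
  · simp
  rw [Nat.choose_two_right, Nat.mul_div_cancel']
  have : v * (v - 1) = (v - 1) * ((v - 1) + 1) := by
    rw [Nat.sub_add_cancel hv]; ring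
  rw [this]
  exact (Nat.even_mul_succ_self (v - 1)).two_dvd

lemma six_choose3 (v : ℕ) : 6 * v.choose 3 = (v - 2) * ((v - 1) * v) := by
  have h := Nat.descFactorial_eq_factorial_mul_choose v 3
  have h2 : v.descFactorial 3 = (v - 2) * ((v - 1) * v) := by
    rw [Nat.descFactorial_succ, Nat.descFactorial_succ, Nat.descFactorial_succ,
      Nat.descFactorial_zero, Nat.sub_zero]
    ring
  have h3 : Nat.factorial 3 = 6 := by decide
  rw [h3] at h
  omega

lemma sts_card_exact {v : ℕ} {T : Finset (Finset (Fin v))} (hT : IsSTSlike v T) :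
    6 * T.card = v * (v - 1) := by
  obtain ⟨h3, hcov, hct⟩ := hT
  have hpairs : (univ : Finset (Fin v)).powersetCard 2 ⊆
      T.biUnion (fun e => e.powersetCard 2) := by
    intro p hp
    rw [Finset.mem_powersetCard] at hp
    obtain ⟨a, b, hab, rfl⟩ := Finset.card_eq_two.mp hp.2
    obtain ⟨e, he, ha, hb⟩ := hcov a b hab
    rw [Finset.mem_biUnion]
    refine ⟨e, he, ?_⟩
    rw [Finset.mem_powersetCard]
    refine ⟨?_, hp.2⟩
    intro z hz
    simp only [Finset.mem_insert, Finset.mem_singleton] at hz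
    rcases hz with rfl | rfl <;> assumption
  have hlow : v.choose 2 ≤ 3 * T.card := by
    calc v.choose 2 = ((univ : Finset (Fin v)).powersetCard 2).card := by
          rw [Finset.card_powersetCard, Finset.card_univ, Fintype.card_fin]
      _ ≤ (T.biUnion (fun e => e.powersetCard 2)).card := Finset.card_le_card hpairs
      _ ≤ ∑ e ∈ T, (e.powersetCard 2).card := Finset.card_biUnion_le
      _ = ∑ e ∈ T, 3 := by
          apply Finset.sum_congr rfl
          intro e he
          rw [Finset.card_powersetCard, h3 e he]
          decide
      _ = 3 * T.card := by rw [Finset.sum_const, smul_eq_mul, mul_comm]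
  have := two_choose2 v
  omega

/-! ### the block construction -/

def bfun (v n j : ℕ) (hn : 0 < n) : Fin v → Fin n :=
  fun x => ⟨(j * v + x.val) % n, Nat.mod_lt _ hn⟩

lemma bfun_val {v n j : ℕ} (hn : 0 < n) (hj : (j + 1) * v ≤ n) (x : Fin v) :
    (bfun v n j hn x).val = j * v + x.val := by
  rw [bfun]
  apply Nat.mod_eq_of_lt
  calc j * v + x.val < j * v + v := by omega
    _ = (j + 1) * v := by ring
    _ ≤ n := hj

lemma bfun_inj {v n j : ℕ} (hn : 0 < n) (hj : (j + 1) * v ≤ n) :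
    Function.Injective (bfun v n j hn) := by
  intro a b hab
  have := congrArg Fin.val hab
  rw [bfun_val hn hj, bfun_val hn hj] at this
  exact Fin.ext (by omega)

theorem construction (t n : ℕ) (ht : 2 ≤ t) (hmod : (t + 2) % 6 = 1 ∨ (t + 2) % 6 = 3)
    (hdvd : (t + 2) ∣ n) :
    ∃ H : Finset (Finset (Fin n)), (∀ e ∈ H, e.card = 3) ∧ ¬ HasStarTrace t H ∧
      6 * H.card = n * (t ^ 2 - 1) := by
  classical
  rcases Nat.eq_zero_or_pos n with rfl | hn0
  · refine ⟨∅, by simp, ?_, by simp⟩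
    rintro ⟨w0, w, f, -, -, -, hfH, -⟩
    exact absurd (hfH ⟨0, by omega⟩) (Finset.notMem_empty _)
  set v := t + 2 with hv
  obtain ⟨q, hq⟩ := hdvd
  obtain ⟨T, hT⟩ := sts_exists v (by omega) hmod
  have hTcard := sts_card_exact hT
  obtain ⟨hT3, hTcov, -⟩ := hT
  have hjle : ∀ j, j < q → (j + 1) * v ≤ n := by
    intro j hj
    calc (j + 1) * v ≤ q * v := Nat.mul_le_mul_right v hj
      _ = n := by rw [hq]; ring
  -- blocks
  set B : ℕ → Finset (Fin n) := fun j => (univ : Finset (Fin v)).image (bfun v n j hn0) with hB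
  have hBval : ∀ j, j < q → ∀ y, y ∈ B j ↔ (j * v ≤ y.val ∧ y.val < j * v + v) := by
    intro j hj y
    rw [hB]
    simp only [Finset.mem_image, Finset.mem_univ, true_and]
    constructor
    · rintro ⟨x, rfl⟩
      rw [bfun_val hn0 (hjle j hj)]
      have := x.2
      omega
    · rintro ⟨h1, h2⟩
      refine ⟨⟨y.val - j * v, by omega⟩, ?_⟩
      apply Fin.ext
      rw [bfun_val hn0 (hjle j hj)]
      simp
      omega
  have hBcard : ∀ j, j < q → (B j).card = v := by
    intro j hj
    rw [hB]
    rw [Finset.card_image_of_injective _ (bfun_inj hn0 (hjle j hj)), Finset.card_univ,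
      Fintype.card_fin]
  have hBdisj : ∀ j, j < q → ∀ j', j' < q → j ≠ j' → ∀ y, y ∈ B j → y ∈ B j' → False := by
    intro j hj j' hj' hne y h1 h2
    rw [hBval j hj] at h1
    rw [hBval j' hj'] at h2
    rcases Nat.lt_or_ge j j' with h | h
    · have : (j + 1) * v ≤ j' * v := Nat.mul_le_mul_right v h
      have : (j + 1) * v = j * v + v := by ring
      omega
    · have hlt : j' < j := by omega
      have : (j' + 1) * v ≤ j * v := Nat.mul_le_mul_right v hlt
      have : (j' + 1) * v = j' * v + v := by ring
      omega
  set Bad : ℕ → Finset (Finset (Fin n)) :=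
    fun j => T.image (fun e => e.image (bfun v n j hn0)) with hBad
  set blockSet : ℕ → Finset (Finset (Fin n)) :=
    fun j => ((B j).powersetCard 3) \ (Bad j) with hblockSet
  set H : Finset (Finset (Fin n)) := (Finset.range q).biUnion blockSet with hH
  have hmemBS : ∀ j e, e ∈ blockSet j ↔ (e ⊆ B j ∧ e.card = 3 ∧ e ∉ Bad j) := by
    intro j e
    rw [hblockSet]
    simp only [Finset.mem_sdiff, Finset.mem_powersetCard]
    tauto
  have hmemH : ∀ e, e ∈ H ↔ ∃ j < q, e ∈ blockSet j := by
    intro e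
    rw [hH]
    simp only [Finset.mem_biUnion, Finset.mem_range]
  -- each edge has card 3
  have hcard3 : ∀ e ∈ H, e.card = 3 := by
    intro e he
    obtain ⟨j, -, hj⟩ := (hmemH e).1 he
    exact ((hmemBS j e).1 hj).2.1
  refine ⟨H, hcard3, ?_, ?_⟩
  · -- no star trace
    rintro ⟨w0, w, f, hwinj, hwne, hfinj, hfH, htr⟩
    set S : Finset (Fin n) := insert w0 (Finset.image w Finset.univ) with hS
    have hw0f : ∀ i, w0 ∈ f i := by
      intro i
      have : w0 ∈ f i ∩ S := by rw [htr i]; simp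
      exact (Finset.mem_inter.mp this).1
    have hwif : ∀ i, w i ∈ f i := by
      intro i
      have : w i ∈ f i ∩ S := by rw [htr i]; simp
      exact (Finset.mem_inter.mp this).1
    have hblock : ∀ i, ∃ j < q, f i ∈ blockSet j := fun i => (hmemH _).1 (hfH i)
    obtain ⟨j0, hj0q, hfi0⟩ := hblock ⟨0, by omega⟩
    have hw0B : w0 ∈ B j0 := ((hmemBS j0 _).1 hfi0).1 (hw0f ⟨0, by omega⟩)
    have hsame : ∀ i, f i ∈ blockSet j0 := by
      intro i
      obtain ⟨j, hjq, hfi⟩ := hblock i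
      have hw0B' : w0 ∈ B j := ((hmemBS j _).1 hfi).1 (hw0f i)
      rcases eq_or_ne j j0 with rfl | hne
      · exact hfi
      · exact (hBdisj j hjq j0 hj0q hne w0 hw0B' hw0B).elim
    have hfsub : ∀ i, f i ⊆ B j0 := fun i => ((hmemBS j0 _).1 (hsame i)).1
    have hw0S : w0 ∉ Finset.image w Finset.univ := by
      rw [Finset.mem_image]
      rintro ⟨i, -, hwi⟩
      exact hwne i hwi
    have hScard : S.card = t + 1 := by
      rw [hS, Finset.card_insert_of_notMem hw0S,
        Finset.card_image_of_injective _ hwinj, Finset.card_univ, Fintype.card_fin]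
    have hSsub : S ⊆ B j0 := by
      rw [hS]
      intro z hz
      rw [Finset.mem_insert] at hz
      rcases hz with rfl | hz
      · exact hw0B
      · rw [Finset.mem_image] at hz
        obtain ⟨i, -, rfl⟩ := hz
        exact hfsub i (hwif i)
    have hsd : (B j0 \ S).card = 1 := by
      rw [Finset.card_sdiff_of_subset hSsub, hBcard j0 hj0q, hScard]
      omega
    obtain ⟨u, hu⟩ := Finset.card_eq_one.mp hsd
    have huBS : u ∈ B j0 \ S := hu ▸ Finset.mem_singleton_self u
    have huB : u ∈ B j0 := (Finset.mem_sdiff.mp huBS).1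
    have huS : u ∉ S := (Finset.mem_sdiff.mp huBS).2
    have hBsub : ∀ z ∈ B j0, z ∉ S → z = u := by
      intro z hz hzS
      have : z ∈ B j0 \ S := Finset.mem_sdiff.mpr ⟨hz, hzS⟩
      rw [hu] at this
      exact Finset.mem_singleton.mp this
    have hfeq : ∀ i, f i = insert u {w0, w i} := by
      intro i
      apply Finset.eq_of_subset_of_card_le
      · intro z hz
        by_cases hzS : z ∈ S
        · have : z ∈ f i ∩ S := Finset.mem_inter.mpr ⟨hz, hzS⟩
          rw [htr i] at this
          simp only [Finset.mem_insert, Finset.mem_singleton] at this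
          simp only [Finset.mem_insert, Finset.mem_singleton]
          tauto
        · have := hBsub z (hfsub i hz) hzS
          subst this
          simp
      · have h1 : ({w0, w i} : Finset (Fin n)).card ≤ 2 := by
          calc ({w0, w i} : Finset (Fin n)).card ≤ ({w i} : Finset (Fin n)).card + 1 :=
                Finset.card_insert_le _ _
            _ = 2 := by rw [Finset.card_singleton]
        have h2 : (insert u ({w0, w i} : Finset (Fin n))).card ≤ 3 := by
          calc (insert u ({w0, w i} : Finset (Fin n))).card
              ≤ ({w0, w i} : Finset (Fin n)).card + 1 := Finset.card_insert_le _ _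
            _ ≤ 3 := by omega
        have h3 : (f i).card = 3 := ((hmemBS j0 _).1 (hsame i)).2.1
        omega
    obtain ⟨a, -, ha⟩ := Finset.mem_image.mp (by rw [hB] at hw0B; exact hw0B)
    obtain ⟨b, -, hb⟩ := Finset.mem_image.mp (by rw [hB] at huB; exact huB)
    have hw0u : w0 ≠ u := fun h => huS (h ▸ Finset.mem_insert_self w0 _)
    have hab : a ≠ b := fun h => hw0u (by rw [← ha, ← hb, h])
    obtain ⟨τ, hτT, haτ, hbτ⟩ := hTcov a b hab
    have hτ3 := hT3 τ hτT
    have h2e : ((τ.erase a).erase b).card = 1 := by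
      rw [Finset.card_erase_of_mem (Finset.mem_erase.mpr ⟨Ne.symm hab, hbτ⟩),
        Finset.card_erase_of_mem haτ, hτ3]
    obtain ⟨c, hc⟩ := Finset.card_eq_one.mp h2e
    have hcmem : c ∈ τ ∧ c ≠ a ∧ c ≠ b := by
      have : c ∈ (τ.erase a).erase b := hc ▸ Finset.mem_singleton_self c
      rw [Finset.mem_erase, Finset.mem_erase] at this
      exact ⟨this.2.2, this.2.1, this.1⟩
    have hτeq : τ = {a, b, c} := by
      apply (Finset.eq_of_subset_of_card_le ?_ ?_).symm
      · intro z hz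
        simp only [Finset.mem_insert, Finset.mem_singleton] at hz
        rcases hz with rfl | rfl | rfl
        · exact haτ
        · exact hbτ
        · exact hcmem.1
      · rw [hτ3, card3 hab (Ne.symm hcmem.2.1) (Ne.symm hcmem.2.2)]
    set y := bfun v n j0 hn0 c with hy
    have hyB : y ∈ B j0 := by rw [hB]; exact Finset.mem_image_of_mem _ (Finset.mem_univ c)
    have hinj := bfun_inj hn0 (hjle j0 hj0q)
    have hyw0 : y ≠ w0 := fun h => hcmem.2.1
      (hinj (show bfun v n j0 hn0 c = bfun v n j0 hn0 a by rw [← hy, h, ← ha]))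
    have hyu : y ≠ u := fun h => hcmem.2.2
      (hinj (show bfun v n j0 hn0 c = bfun v n j0 hn0 b by rw [← hy, h, ← hb]))
    have hyS : y ∈ S := by
      by_contra hyS
      exact hyu (hBsub y hyB hyS)
    obtain ⟨jj, hjj⟩ : ∃ jj, y = w jj := by
      rw [hS, Finset.mem_insert] at hyS
      rcases hyS with h | h
      · exact absurd h hyw0
      · rw [Finset.mem_image] at h
        obtain ⟨jj, -, hjj⟩ := h
        exact ⟨jj, hjj.symm⟩
    have hτ' : τ.image (bfun v n j0 hn0) ∈ Bad j0 := by
      rw [hBad]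
      exact Finset.mem_image_of_mem _ hτT
    have hτ'eq : τ.image (bfun v n j0 hn0) = f jj := by
      rw [hτeq, hfeq jj]
      rw [Finset.image_insert, Finset.image_insert, Finset.image_singleton, ha, hb, ← hy,
        ← hjj]
      rw [Finset.insert_comm]
    have hnotbad : f jj ∉ Bad j0 := ((hmemBS j0 _).1 (hsame jj)).2.2
    exact hnotbad (hτ'eq ▸ hτ')
  · -- cardinality
    have hBadsub : ∀ j, j < q → Bad j ⊆ (B j).powersetCard 3 := by
      intro j hj e he
      rw [hBad, Finset.mem_image] at he
      obtain ⟨τ, hτ, rfl⟩ := he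
      rw [Finset.mem_powersetCard]
      constructor
      · intro z hz
        rw [Finset.mem_image] at hz
        obtain ⟨x, -, rfl⟩ := hz
        rw [hB]
        exact Finset.mem_image_of_mem _ (Finset.mem_univ x)
      · rw [Finset.card_image_of_injective _ (bfun_inj hn0 (hjle j hj)), hT3 τ hτ]
    have hBadcard : ∀ j, j < q → (Bad j).card = T.card := by
      intro j hj
      rw [hBad]
      apply Finset.card_image_of_injOn
      intro e1 h1 e2 h2 h12
      have h12' : e1.image (bfun v n j hn0) = e2.image (bfun v n j hn0) := h12
      ext z
      constructor
      · intro hz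
        have := Finset.mem_image_of_mem (bfun v n j hn0) hz
        rw [h12'] at this
        rw [Finset.mem_image] at this
        obtain ⟨z', hz', hzz⟩ := this
        rwa [← bfun_inj hn0 (hjle j hj) hzz]
      · intro hz
        have := Finset.mem_image_of_mem (bfun v n j hn0) hz
        rw [← h12'] at this
        rw [Finset.mem_image] at this
        obtain ⟨z', hz', hzz⟩ := this
        rwa [← bfun_inj hn0 (hjle j hj) hzz]
    have hHcard : H.card = q * (v.choose 3 - T.card) := by
      rw [hH, Finset.card_biUnion]
      · have hconst : ∀ j ∈ Finset.range q, (blockSet j).card = v.choose 3 - T.card := by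
          intro j hj
          rw [Finset.mem_range] at hj
          rw [hblockSet]
          simp only
          rw [Finset.card_sdiff_of_subset (hBadsub j hj), Finset.card_powersetCard, hBcard j hj,
            hBadcard j hj]
        rw [Finset.sum_congr rfl hconst, Finset.sum_const, smul_eq_mul, Finset.card_range]
      · intro j hj j' hj' hne
        simp only [Function.onFun, Finset.mem_coe] at hj hj' ⊢
        rw [Finset.mem_range] at hj hj'
        rw [Finset.disjoint_left]
        intro e hej hej'
        have h1 := ((hmemBS j e).1 hej).1
        have h2 := ((hmemBS j' e).1 hej').1
        have hce := ((hmemBS j e).1 hej).2.1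
        have : e.Nonempty := Finset.card_pos.mp (by omega)
        obtain ⟨z, hz⟩ := this
        exact hBdisj j hj j' hj' hne z (h1 hz) (h2 hz)
    rw [hHcard]
    have hc3 : 6 * v.choose 3 = (v - 2) * ((v - 1) * v) := six_choose3 v
    have hTle : T.card ≤ v.choose 3 := by
      have h1 : (v - 2) * ((v - 1) * v) = (v * (v - 1)) * (v - 2) := by ring
      have h2 : (v * (v - 1)) * 1 ≤ (v * (v - 1)) * (v - 2) :=
        Nat.mul_le_mul_left _ (by omega)
      omega
    have e1 : 6 * v.choose 3 - 6 * T.card = (v * (v - 1)) * (v - 3) := by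
      have h1 : 6 * v.choose 3 = (v * (v - 1)) * (v - 2) := by rw [hc3]; ring
      have h2 : (v * (v - 1)) * (v - 2) = (v * (v - 1)) * (v - 3) + (v * (v - 1)) * 1 := by
        rw [← Nat.mul_add]
        congr 1
        omega
      rw [h1, hTcard, h2]
      omega
    have hvv : v * (v - 1) = (t + 2) * (t + 1) := by
      rw [hv]
      congr 1
    have hv3 : v - 3 = t - 1 := by omega
    have hsq : (t + 1) * (t - 1) = t ^ 2 - 1 := by
      obtain ⟨c, rfl⟩ : ∃ c, t = c + 1 := ⟨t - 1, by omega⟩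
      have h1 : (c + 1) ^ 2 = c * (c + 2) + 1 := by ring
      have h2 : (c + 1 + 1) * (c + 1 - 1) = c * (c + 2) := by
        simp [Nat.add_sub_cancel]
        ring
      omega
    calc 6 * (q * (v.choose 3 - T.card)) = q * (6 * (v.choose 3 - T.card)) := by ring
      _ = q * (6 * v.choose 3 - 6 * T.card) := by rw [Nat.mul_sub]
      _ = q * ((v * (v - 1)) * (v - 3)) := by rw [e1]
      _ = q * (((t + 2) * (t + 1)) * (t - 1)) := by rw [hvv, hv3]
      _ = ((t + 2) * q) * ((t + 1) * (t - 1)) := by ring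
      _ = n * (t ^ 2 - 1) := by rw [← hq, hsq]


/-- STATEMENT 6: for `t ≥ 2` with `t+2 ≡ 1 or 3 (mod 6)` and `(t+2) ∣ n`,
`ex_3(n, Tr(K_{1,t})) = n(t²−1)/6` (stated via `6·card`). -/
theorem stmt_7 (t n : ℕ) (ht : 2 ≤ t) (hmod : (t + 2) % 6 = 1 ∨ (t + 2) % 6 = 3) (hdvd : (t + 2) ∣ n) :
    (∃ H : Finset (Finset (Fin n)), (∀ e ∈ H, e.card = 3) ∧ ¬ HasStarTrace t H ∧
        6 * H.card = n * (t ^ 2 - 1)) ∧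
    ∀ H : Finset (Finset (Fin n)), (∀ e ∈ H, e.card = 3) → ¬ HasStarTrace t H →
      6 * H.card ≤ n * (t ^ 2 - 1) := by
  constructor
  · exact construction t n ht hmod hdvd
  · intro H h3 hns
    exact upper_bound t n (by omega) H h3 hns
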